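/- Let U ∈ B(X) and V ∈ B(Y) be generalized invertible operators with decompositions U = U' ⊕ 0 : X₁ ⊕ X₂ → X₁' ⊕ X₂' and V = V' ⊕ 0 : Y₁ ⊕ Y₂ → Y₁' ⊕ Y₂' (U', V' invertible). If X₂ ≅ Y₂ and X₂' ≅ Y₂' and additionally X₂ ≅ X₂' (so all four kernel/cokernel spaces are mutually isomorphic), then U and V are Schur coupled. -/

import Mathlib

open ContinuousLinearMap

/-- `U` and `V` are *Schur coupled* if they arise as the two Schur complements of a
`2 × 2` block operator on `X × Y` with invertible diagonal entries. -/
def SchurCoupled {X Y : Type*} [NormedAddCommGroup X] [NormedSpace ℂ X]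
    [NormedAddCommGroup Y] [NormedSpace ℂ Y]
    (U : X →L[ℂ] X) (V : Y →L[ℂ] Y) : Prop :=
  ∃ (A : X ≃L[ℂ] X) (D : Y ≃L[ℂ] Y) (B : Y →L[ℂ] X) (C : X →L[ℂ] Y),
    U = (A : X →L[ℂ] X) - B ∘L (D.symm : Y →L[ℂ] Y) ∘L C ∧
    V = (D : Y →L[ℂ] Y) - C ∘L (A.symm : X →L[ℂ] X) ∘L B

/-- Generalized invertible operators `U = U' ⊕ 0 : X₁ ⊕ X₂ → X₁' ⊕ X₂'` and
`V = V' ⊕ 0 : Y₁ ⊕ Y₂ → Y₁' ⊕ Y₂'` with mutually isomorphic kernels and cokernels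
`X₂ ≅ Y₂`, `X₂' ≅ Y₂'` and `X₂ ≅ X₂'` are Schur coupled. -/
theorem schur_coupled_of_isomorphic_kernels_cokernels
    {X Y X₁ X₂ X₁' X₂' Y₁ Y₂ Y₁' Y₂' : Type*}
    [NormedAddCommGroup X] [NormedSpace ℂ X] [CompleteSpace X]
    [NormedAddCommGroup Y] [NormedSpace ℂ Y] [CompleteSpace Y]
    [NormedAddCommGroup X₁] [NormedSpace ℂ X₁] [CompleteSpace X₁]
    [NormedAddCommGroup X₂] [NormedSpace ℂ X₂] [CompleteSpace X₂]
    [NormedAddCommGroup X₁'] [NormedSpace ℂ X₁'] [CompleteSpace X₁']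
    [NormedAddCommGroup X₂'] [NormedSpace ℂ X₂'] [CompleteSpace X₂']
    [NormedAddCommGroup Y₁] [NormedSpace ℂ Y₁] [CompleteSpace Y₁]
    [NormedAddCommGroup Y₂] [NormedSpace ℂ Y₂] [CompleteSpace Y₂]
    [NormedAddCommGroup Y₁'] [NormedSpace ℂ Y₁'] [CompleteSpace Y₁']
    [NormedAddCommGroup Y₂'] [NormedSpace ℂ Y₂'] [CompleteSpace Y₂']
    (iX : X ≃L[ℂ] (X₁ × X₂)) (iX' : X ≃L[ℂ] (X₁' × X₂'))
    (iY : Y ≃L[ℂ] (Y₁ × Y₂)) (iY' : Y ≃L[ℂ] (Y₁' × Y₂'))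
    (U' : X₁ ≃L[ℂ] X₁') (V' : Y₁ ≃L[ℂ] Y₁')
    (U : X →L[ℂ] X) (V : Y →L[ℂ] Y)
    (hU : U = (iX'.symm : (X₁' × X₂') →L[ℂ] X) ∘L
      ((U' : X₁ →L[ℂ] X₁').prodMap (0 : X₂ →L[ℂ] X₂')) ∘L (iX : X →L[ℂ] (X₁ × X₂)))
    (hV : V = (iY'.symm : (Y₁' × Y₂') →L[ℂ] Y) ∘L
      ((V' : Y₁ →L[ℂ] Y₁').prodMap (0 : Y₂ →L[ℂ] Y₂')) ∘L (iY : Y →L[ℂ] (Y₁ × Y₂)))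
    (e₂ : X₂ ≃L[ℂ] Y₂) (e₂' : X₂' ≃L[ℂ] Y₂') (e : X₂ ≃L[ℂ] X₂') :
    SchurCoupled U V := by
  -- kernel-to-cokernel isomorphism on the `Y` side
  set f : Y₂ ≃L[ℂ] Y₂' := e₂.symm.trans (e.trans e₂') with hf
  refine ⟨iX.trans ((U'.prodCongr e).trans iX'.symm),
          iY.trans ((V'.prodCongr f).trans iY'.symm),
          (iX'.symm : (X₁' × X₂') →L[ℂ] X) ∘L
            ((0 : Y₁ →L[ℂ] X₁').prodMap ((e₂.symm.trans e : Y₂ ≃L[ℂ] X₂') : Y₂ →L[ℂ] X₂')) ∘L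
            (iY : Y →L[ℂ] (Y₁ × Y₂)),
          (iY'.symm : (Y₁' × Y₂') →L[ℂ] Y) ∘L
            ((0 : X₁ →L[ℂ] Y₁').prodMap ((e.trans e₂' : X₂ ≃L[ℂ] Y₂') : X₂ →L[ℂ] Y₂')) ∘L
            (iX : X →L[ℂ] (X₁ × X₂)), ?_, ?_⟩
  · ext x
    apply iX'.injective
    simp [hU, sub_eq_iff_eq_add]
    ext <;> simp [ContinuousLinearEquiv.prodCongr_symm, hf]
  · ext y
    apply iY'.injective
    simp [hV, sub_eq_iff_eq_add, hf]
    ext <;> simp [ContinuousLinearEquiv.prodCongr_symm, hf]
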